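/- arXiv:2412.17886 — 2 statements merged into one kernel-verified Lean document; each statement's English description precedes it below -/
import Mathlib

section
/- The Green's function of the hyperbolic operator −Δ_{B²} − 1/4 on the Poincaré disc, given by G(x,y) = (1/(4π)) ∫_0^1 t^{−1/2}(1−t)^{−1/2}(sinh²(ρ(x,y)/2) + t)^{−1/2} dt, satisfies the upper bound G(x,y) ≤ −(1/(2π)) ln|x−y| + C for some universal constant C and all distinct x, y in the unit disc B_1. -/
open Metric MeasureTheory Real RealInnerProductSpace

noncomputable section

/-- The Möbius transformation `T_a` of the unit disc in `ℝ²`. -/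
def mobius (a x : EuclideanSpace ℝ (Fin 2)) : EuclideanSpace ℝ (Fin 2) :=
  (1 - 2 * ⟪x, a⟫ + ‖x‖ ^ 2 * ‖a‖ ^ 2)⁻¹ •
    (‖x - a‖ ^ 2 • a - (1 - ‖a‖ ^ 2) • (x - a))

/-- Hyperbolic distance from the origin in the Poincaré disc model. -/
def rhoDist (x : EuclideanSpace ℝ (Fin 2)) : ℝ :=
  Real.log ((1 + ‖x‖) / (1 - ‖x‖))

/-- The Green's function of `-Δ_{𝔹²} - 1/4` on the Poincaré disc. -/
def hypGreen (x y : EuclideanSpace ℝ (Fin 2)) : ℝ :=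
  (1 / (4 * π)) * ∫ t in Set.Ioo (0 : ℝ) 1,
    t ^ (-(1 / 2) : ℝ) * (1 - t) ^ (-(1 / 2) : ℝ) *
      (Real.sinh (rhoDist (mobius x y) / 2) ^ 2 + t) ^ (-(1 / 2) : ℝ)

/- ### Auxiliary lemmas -/

lemma aux_sinh_half_log_sq {μ : ℝ} (h0 : 0 ≤ μ) (h1 : μ < 1) :
    Real.sinh (Real.log ((1 + μ) / (1 - μ)) / 2) ^ 2 = μ ^ 2 / (1 - μ ^ 2) := by
  have hm : 0 < 1 - μ := by linarith
  have hp : 0 < 1 + μ := by linarith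
  set q : ℝ := (1 + μ) / (1 - μ) with hq
  have hq0 : 0 < q := div_pos hp hm
  set E : ℝ := Real.exp (Real.log q / 2) with hE
  have hE0 : 0 < E := Real.exp_pos _
  have hEE : E * E = q := by
    rw [hE, ← Real.exp_add]
    rw [show Real.log q / 2 + Real.log q / 2 = Real.log q by ring, Real.exp_log hq0]
  have hs : Real.sinh (Real.log q / 2) = (E - E⁻¹) / 2 := by
    rw [Real.sinh_eq, hE, ← Real.exp_neg]
  rw [hs]
  have key : (q - 1) ^ 2 * (1 - μ ^ 2) = μ ^ 2 * (4 * q) := by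
    rw [hq]; field_simp; ring
  have h1m : 1 - μ ^ 2 ≠ 0 := by nlinarith
  field_simp
  linear_combination key + ((E * E + q - 2) * (1 - μ ^ 2) - 4 * μ ^ 2) * hEE

lemma aux_mobius_norm (x y : EuclideanSpace ℝ (Fin 2)) (hx : ‖x‖ < 1) (hy : ‖y‖ < 1) :
    ‖mobius x y‖ < 1 ∧
      ‖mobius x y‖ ^ 2 * ((1 - ‖x‖ ^ 2) * (1 - ‖y‖ ^ 2) + ‖x - y‖ ^ 2)
        = ‖x - y‖ ^ 2 := by
  have ha0 : (0:ℝ) ≤ ‖x‖ := norm_nonneg _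
  have hb0 : (0:ℝ) ≤ ‖y‖ := norm_nonneg _
  set a := ‖x‖ with ha
  set b := ‖y‖ with hb
  set p : ℝ := ⟪y, x⟫ with hp
  set r := ‖y - x‖ with hrdef
  have hr2 : r ^ 2 = b ^ 2 - 2 * p + a ^ 2 := by
    rw [hrdef, @norm_sub_sq_real, ha, hb, hp]
  have hrxy : ‖x - y‖ = r := by rw [hrdef, norm_sub_rev]
  set c : ℝ := 1 - 2 * p + b ^ 2 * a ^ 2 with hc
  have hcD : c = (1 - a ^ 2) * (1 - b ^ 2) + r ^ 2 := by rw [hc, hr2]; ring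
  have hab : 0 < (1 - a ^ 2) * (1 - b ^ 2) := by
    apply mul_pos <;> nlinarith
  have hc0 : 0 < c := by rw [hcD]; positivity
  set v : EuclideanSpace ℝ (Fin 2) := ‖y - x‖ ^ 2 • x - (1 - ‖x‖ ^ 2) • (y - x) with hv
  have hm : mobius x y = c⁻¹ • v := rfl
  have e1 : ⟪x, x⟫ = a ^ 2 := real_inner_self_eq_norm_sq x
  have e2 : ⟪y, y⟫ = b ^ 2 := real_inner_self_eq_norm_sq y
  have e3 : ⟪x, y⟫ = p := by rw [hp, real_inner_comm]
  have hv2 : ‖v‖ ^ 2 = r ^ 2 * c := by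
    rw [← real_inner_self_eq_norm_sq, hv]
    simp only [inner_sub_left, inner_sub_right, real_inner_smul_left, real_inner_smul_right]
    rw [e1, e2, e3, ← hp, ← hrdef, ← ha, hc]
    linear_combination (r ^ 2 * a ^ 2 + 2 * a ^ 2 - a ^ 4 - 1) * hr2
  have hmn : ‖mobius x y‖ ^ 2 = r ^ 2 / c := by
    rw [hm, norm_smul, mul_pow, hv2, norm_inv, Real.norm_eq_abs, abs_of_pos hc0]
    field_simp
  constructor
  · have h2 : ‖mobius x y‖ ^ 2 < 1 := by
      rw [hmn, div_lt_one hc0, hcD]; linarith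
    nlinarith [norm_nonneg (mobius x y)]
  · rw [hmn, hrxy, ← hcD]
    field_simp

lemma aux_g1_contOn {d : ℝ} (hd0 : 0 < d) (s : Set ℝ) (hs : ∀ t ∈ s, 0 < t) :
    ContinuousOn (fun t : ℝ => t ^ (-(1/2) : ℝ) * (d ^ 2 + t) ^ (-(1/2) : ℝ)) s := by
  apply ContinuousOn.mul
  · exact continuousOn_id.rpow_const fun t ht => Or.inl (hs t ht).ne'
  · exact (continuousOn_const.add continuousOn_id).rpow_const
      fun t ht => Or.inl (add_pos (pow_pos hd0 2) (hs t ht)).ne'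

lemma aux_g1_integrableOn {d : ℝ} (hd0 : 0 < d) :
    IntegrableOn (fun t : ℝ => t ^ (-(1/2) : ℝ) * (d ^ 2 + t) ^ (-(1/2) : ℝ))
      (Set.Ioc (0:ℝ) 1) volume := by
  have hd2 : (0:ℝ) < d ^ 2 := by positivity
  have hbase : IntegrableOn (fun t : ℝ => (d ^ 2) ^ (-(1/2) : ℝ) * t ^ (-(1/2) : ℝ))
      (Set.Ioc (0:ℝ) 1) volume := by
    have := (intervalIntegral.intervalIntegrable_rpow' (a := (0:ℝ)) (b := 1)
      (r := -(1/2)) (by norm_num))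
    rw [intervalIntegrable_iff_integrableOn_Ioc_of_le zero_le_one] at this
    exact this.const_mul _
  apply Integrable.mono' hbase
  · exact ((aux_g1_contOn hd0 _ (fun t ht => ht.1)).aestronglyMeasurable measurableSet_Ioc)
  · filter_upwards [ae_restrict_mem measurableSet_Ioc] with t ht
    have ht0 : 0 < t := ht.1
    rw [Real.norm_eq_abs, abs_of_nonneg (by positivity)]
    rw [mul_comm ((d ^ 2) ^ (-(1/2) : ℝ))]
    exact mul_le_mul_of_nonneg_left
      (Real.rpow_le_rpow_of_nonpos hd2 (by linarith) (by norm_num))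
      (Real.rpow_nonneg ht0.le _)

lemma aux_g2_integrableOn :
    IntegrableOn (fun t : ℝ => (1 - t) ^ (-(1/2) : ℝ)) (Set.Ioc (0:ℝ) 1) volume := by
  have h : IntervalIntegrable (fun t : ℝ => (1 - t) ^ (-(1/2) : ℝ)) volume 0 1 := by
    have := (intervalIntegral.intervalIntegrable_rpow' (a := (0:ℝ)) (b := 1)
      (r := -(1/2)) (by norm_num)).comp_sub_left 1
    simpa using this.symm
  rwa [intervalIntegrable_iff_integrableOn_Ioc_of_le zero_le_one] at h

lemma aux_g2_integral : ∫ t in (0:ℝ)..1, (1 - t) ^ (-(1/2) : ℝ) = 2 := by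
  have := intervalIntegral.integral_comp_sub_left (a := (0:ℝ)) (b := 1)
    (fun u : ℝ => u ^ (-(1/2) : ℝ)) 1
  simp only [sub_self, sub_zero] at this
  rw [this, integral_rpow (Or.inl (by norm_num))]
  norm_num

lemma aux_sqrt_int_eval {c : ℝ} (hc : 0 ≤ c) :
    ∫ t in (0:ℝ)..c, t ^ (-(1/2) : ℝ) = 2 * c ^ ((1:ℝ)/2) := by
  rw [integral_rpow (Or.inl (by norm_num))]
  rw [Real.zero_rpow (by norm_num)]
  norm_num
  ring

lemma aux_g1_integral_bound {d : ℝ} (hd0 : 0 < d) (hd2 : d < 2) :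
    ∫ t in (0:ℝ)..1, t ^ (-(1/2) : ℝ) * (d ^ 2 + t) ^ (-(1/2) : ℝ)
      ≤ -2 * Real.log d + (2 + 2 * Real.log 2) := by
  have hdsq : (0:ℝ) < d ^ 2 := by positivity
  have hII : IntervalIntegrable
      (fun t : ℝ => t ^ (-(1/2) : ℝ) * (d ^ 2 + t) ^ (-(1/2) : ℝ)) volume 0 1 :=
    (intervalIntegrable_iff_integrableOn_Ioc_of_le zero_le_one).mpr (aux_g1_integrableOn hd0)
  rcases le_or_gt d 1 with hd1 | hd1
  · -- d ≤ 1 : split at d^2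
    have hd21 : d ^ 2 ≤ 1 := by nlinarith
    have h1 : IntervalIntegrable
        (fun t : ℝ => t ^ (-(1/2) : ℝ) * (d ^ 2 + t) ^ (-(1/2) : ℝ)) volume 0 (d ^ 2) := by
      rw [intervalIntegrable_iff_integrableOn_Ioc_of_le hdsq.le]
      exact (aux_g1_integrableOn hd0).mono_set (Set.Ioc_subset_Ioc le_rfl hd21)
    have h2 : IntervalIntegrable
        (fun t : ℝ => t ^ (-(1/2) : ℝ) * (d ^ 2 + t) ^ (-(1/2) : ℝ)) volume (d ^ 2) 1 := by
      apply ContinuousOn.intervalIntegrable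
      apply aux_g1_contOn hd0
      intro t ht
      rw [Set.uIcc_of_le hd21] at ht
      exact lt_of_lt_of_le hdsq ht.1
    rw [← intervalIntegral.integral_add_adjacent_intervals h1 h2]
    have B1 : ∫ t in (0:ℝ)..(d ^ 2), t ^ (-(1/2) : ℝ) * (d ^ 2 + t) ^ (-(1/2) : ℝ) ≤ 2 := by
      have hmono : ∫ t in (0:ℝ)..(d ^ 2), t ^ (-(1/2) : ℝ) * (d ^ 2 + t) ^ (-(1/2) : ℝ)
          ≤ ∫ t in (0:ℝ)..(d ^ 2), (d ^ 2) ^ (-(1/2) : ℝ) * t ^ (-(1/2) : ℝ) := by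
        apply intervalIntegral.integral_mono_on hdsq.le h1
        · have := (intervalIntegral.intervalIntegrable_rpow' (a := (0:ℝ)) (b := d ^ 2)
            (r := -(1/2)) (by norm_num))
          exact this.const_mul _
        · intro t ht
          rw [mul_comm ((d ^ 2) ^ (-(1/2) : ℝ))]
          exact mul_le_mul_of_nonneg_left
            (Real.rpow_le_rpow_of_nonpos hdsq (by linarith [ht.1]) (by norm_num))
            (Real.rpow_nonneg ht.1 _)
      have hval : ∫ t in (0:ℝ)..(d ^ 2), (d ^ 2) ^ (-(1/2) : ℝ) * t ^ (-(1/2) : ℝ) = 2 := by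
        rw [intervalIntegral.integral_const_mul, aux_sqrt_int_eval hdsq.le,
          ← mul_assoc, mul_comm ((d ^ 2) ^ (-(1/2) : ℝ)), mul_assoc,
          ← Real.rpow_add hdsq]
        norm_num
      linarith [hmono, hval.le]
    have B2 : ∫ t in (d ^ 2 : ℝ)..1, t ^ (-(1/2) : ℝ) * (d ^ 2 + t) ^ (-(1/2) : ℝ)
        ≤ -2 * Real.log d := by
      have hmono : ∫ t in (d ^ 2 : ℝ)..1, t ^ (-(1/2) : ℝ) * (d ^ 2 + t) ^ (-(1/2) : ℝ)
          ≤ ∫ t in (d ^ 2 : ℝ)..1, t⁻¹ := by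
        apply intervalIntegral.integral_mono_on hd21 h2
        · apply ContinuousOn.intervalIntegrable
          apply ContinuousOn.inv₀ continuousOn_id
          intro t ht
          rw [Set.uIcc_of_le hd21] at ht
          exact (lt_of_lt_of_le hdsq ht.1).ne'
        · intro t ht
          have ht0 : 0 < t := lt_of_lt_of_le hdsq ht.1
          calc t ^ (-(1/2) : ℝ) * (d ^ 2 + t) ^ (-(1/2) : ℝ)
              ≤ t ^ (-(1/2) : ℝ) * t ^ (-(1/2) : ℝ) :=
                mul_le_mul_of_nonneg_left
                  (Real.rpow_le_rpow_of_nonpos ht0 (by linarith) (by norm_num))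
                  (Real.rpow_nonneg ht0.le _)
            _ = t⁻¹ := by
                rw [← Real.rpow_add ht0]
                norm_num
                exact Real.rpow_neg_one t
      have hval : ∫ t in (d ^ 2 : ℝ)..1, t⁻¹ = -2 * Real.log d := by
        rw [integral_inv (by
          intro h
          rw [Set.uIcc_of_le hd21] at h
          exact absurd h.1 (not_le.mpr hdsq))]
        rw [one_div, Real.log_inv, Real.log_pow]
        push_cast
        ring
      linarith [hmono, hval.le]
    have hlog2 : (0:ℝ) ≤ Real.log 2 := Real.log_nonneg one_le_two
    linarith [B1, B2]
  · -- 1 < d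
    have hbound : ∫ t in (0:ℝ)..1, t ^ (-(1/2) : ℝ) * (d ^ 2 + t) ^ (-(1/2) : ℝ)
        ≤ ∫ t in (0:ℝ)..1, t ^ (-(1/2) : ℝ) * 1 := by
      apply intervalIntegral.integral_mono_on zero_le_one hII
      · simpa using (intervalIntegral.intervalIntegrable_rpow' (a := (0:ℝ)) (b := 1)
          (r := -(1/2)) (by norm_num))
      · intro t ht
        apply mul_le_mul_of_nonneg_left _ (Real.rpow_nonneg ht.1 _)
        exact Real.rpow_le_one_of_one_le_of_nonpos (by nlinarith [ht.1]) (by norm_num)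
    have hval : ∫ t in (0:ℝ)..1, t ^ (-(1/2) : ℝ) * 1 = 2 := by
      simp only [mul_one]
      rw [aux_sqrt_int_eval zero_le_one]
      norm_num
    have hlogd : Real.log d ≤ Real.log 2 := Real.log_le_log hd0 hd2.le
    have hlogd0 : 0 ≤ Real.log d := Real.log_nonneg hd1.le
    linarith [hbound, hval.le]

lemma aux_pointwise_bound {S d t : ℝ} (hd0 : 0 < d) (hS : d ^ 2 ≤ S)
    (ht0 : 0 < t) (ht1 : t < 1) :
    t ^ (-(1/2) : ℝ) * (1 - t) ^ (-(1/2) : ℝ) * (S + t) ^ (-(1/2) : ℝ)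
      ≤ t ^ (-(1/2) : ℝ) * (d ^ 2 + t) ^ (-(1/2) : ℝ) + (1 - t) ^ (-(1/2) : ℝ) := by
  have hS0 : 0 < S := lt_of_lt_of_le (by positivity) hS
  have h1t : 0 < 1 - t := by linarith
  set A := t ^ (-(1/2) : ℝ) with hA
  set B := (1 - t) ^ (-(1/2) : ℝ) with hB
  set C := (S + t) ^ (-(1/2) : ℝ) with hC
  set C' := (d ^ 2 + t) ^ (-(1/2) : ℝ) with hC'
  have hA0 : 0 ≤ A := Real.rpow_nonneg ht0.le _
  have hB0 : 0 ≤ B := Real.rpow_nonneg h1t.le _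
  have hC0 : 0 ≤ C := Real.rpow_nonneg (by linarith) _
  have k1 : B ≤ 1 + t * B := by
    have hmul : (1 - t) * B = (1 - t) ^ ((1:ℝ)/2) := by
      rw [hB]
      calc (1 - t) * (1 - t) ^ (-(1/2) : ℝ)
          = (1 - t) ^ (1:ℝ) * (1 - t) ^ (-(1/2) : ℝ) := by rw [Real.rpow_one]
        _ = (1 - t) ^ ((1:ℝ) + -(1/2)) := (Real.rpow_add h1t _ _).symm
        _ = (1 - t) ^ ((1:ℝ)/2) := by norm_num
    have hle1 : (1 - t) * B ≤ 1 := by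
      rw [hmul]
      exact Real.rpow_le_one h1t.le (by linarith) (by norm_num)
    have hexp : B = (1 - t) * B + t * B := by ring
    linarith
  have k2 : C ≤ C' :=
    Real.rpow_le_rpow_of_nonpos (by positivity) (by linarith) (by norm_num)
  have k3 : t ^ ((1:ℝ)/2) * C ≤ 1 := by
    have hCt : C ≤ t ^ (-(1/2) : ℝ) :=
      Real.rpow_le_rpow_of_nonpos ht0 (by linarith) (by norm_num)
    calc t ^ ((1:ℝ)/2) * C ≤ t ^ ((1:ℝ)/2) * t ^ (-(1/2) : ℝ) :=
          mul_le_mul_of_nonneg_left hCt (Real.rpow_nonneg ht0.le _)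
      _ = t ^ ((1:ℝ)/2 + -(1/2)) := (Real.rpow_add ht0 _ _).symm
      _ = 1 := by norm_num
  have k4 : A * t = t ^ ((1:ℝ)/2) := by
    rw [hA]
    calc t ^ (-(1/2) : ℝ) * t = t ^ (-(1/2) : ℝ) * t ^ (1:ℝ) := by rw [Real.rpow_one]
      _ = t ^ (-(1/2) + 1 : ℝ) := (Real.rpow_add ht0 _ _).symm
      _ = t ^ ((1:ℝ)/2) := by norm_num
  calc A * B * C ≤ A * (1 + t * B) * C :=
        mul_le_mul_of_nonneg_right (mul_le_mul_of_nonneg_left k1 hA0) hC0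
    _ = A * C + (A * t) * (B * C) := by ring
    _ ≤ A * C' + (A * t) * (B * C) := by
        have := mul_le_mul_of_nonneg_left k2 hA0; linarith
    _ = A * C' + B * (t ^ ((1:ℝ)/2) * C) := by rw [k4]; ring
    _ ≤ A * C' + B * 1 := by
        have := mul_le_mul_of_nonneg_left k3 hB0; linarith
    _ = A * C' + B := by ring

lemma aux_full_integral_bound {S d : ℝ} (hd0 : 0 < d) (hd2 : d < 2) (hS : d ^ 2 ≤ S) :
    ∫ t in Set.Ioo (0:ℝ) 1,
        t ^ (-(1/2) : ℝ) * (1 - t) ^ (-(1/2) : ℝ) * (S + t) ^ (-(1/2) : ℝ)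
      ≤ -2 * Real.log d + (4 + 2 * Real.log 2) := by
  have hS0 : 0 < S := lt_of_lt_of_le (by positivity) hS
  set f : ℝ → ℝ := fun t =>
    t ^ (-(1/2) : ℝ) * (1 - t) ^ (-(1/2) : ℝ) * (S + t) ^ (-(1/2) : ℝ) with hf
  set g1 : ℝ → ℝ := fun t => t ^ (-(1/2) : ℝ) * (d ^ 2 + t) ^ (-(1/2) : ℝ) with hg1
  set g2 : ℝ → ℝ := fun t => (1 - t) ^ (-(1/2) : ℝ) with hg2
  have hg1o : IntegrableOn g1 (Set.Ioo (0:ℝ) 1) volume :=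
    (aux_g1_integrableOn hd0).mono_set Set.Ioo_subset_Ioc_self
  have hg2o : IntegrableOn g2 (Set.Ioo (0:ℝ) 1) volume :=
    aux_g2_integrableOn.mono_set Set.Ioo_subset_Ioc_self
  have hfg : ∀ t ∈ Set.Ioo (0:ℝ) 1, f t ≤ g1 t + g2 t := fun t ht =>
    aux_pointwise_bound hd0 hS ht.1 ht.2
  have hfcont : ContinuousOn f (Set.Ioo (0:ℝ) 1) := by
    apply ContinuousOn.mul
    apply ContinuousOn.mul
    · exact continuousOn_id.rpow_const fun t ht => Or.inl ht.1.ne'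
    · exact (continuousOn_const.sub continuousOn_id).rpow_const
        fun t ht => Or.inl (by have := ht.2; intro hc; simp at hc; linarith)
    · exact (continuousOn_const.add continuousOn_id).rpow_const
        fun t ht => Or.inl (add_pos hS0 ht.1).ne'
  have hfo : IntegrableOn f (Set.Ioo (0:ℝ) 1) volume := by
    apply Integrable.mono' (hg1o.add hg2o)
    · exact hfcont.aestronglyMeasurable measurableSet_Ioo
    · filter_upwards [ae_restrict_mem measurableSet_Ioo] with t ht
      have ht0 : 0 < t := ht.1
      have ht1 : t < 1 := ht.2
      rw [Real.norm_eq_abs, abs_of_nonneg]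
      · exact hfg t ht
      · have h1t : (0:ℝ) < 1 - t := by linarith
        rw [hf]
        positivity
  calc ∫ t in Set.Ioo (0:ℝ) 1, f t
      ≤ ∫ t in Set.Ioo (0:ℝ) 1, (g1 t + g2 t) :=
        setIntegral_mono_on hfo (hg1o.add hg2o) measurableSet_Ioo hfg
    _ = (∫ t in Set.Ioo (0:ℝ) 1, g1 t) + ∫ t in Set.Ioo (0:ℝ) 1, g2 t :=
        integral_add hg1o hg2o
    _ ≤ (-2 * Real.log d + (2 + 2 * Real.log 2)) + 2 := by
        have e1 : ∫ t in Set.Ioo (0:ℝ) 1, g1 t = ∫ t in (0:ℝ)..1, g1 t := by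
          rw [intervalIntegral.integral_of_le zero_le_one, integral_Ioc_eq_integral_Ioo]
        have e2 : ∫ t in Set.Ioo (0:ℝ) 1, g2 t = ∫ t in (0:ℝ)..1, g2 t := by
          rw [intervalIntegral.integral_of_le zero_le_one, integral_Ioc_eq_integral_Ioo]
        rw [e1, e2, aux_g2_integral]
        exact add_le_add (aux_g1_integral_bound hd0 hd2) le_rfl
    _ = -2 * Real.log d + (4 + 2 * Real.log 2) := by ring

/-- Logarithmic upper bound for the Green's function: `G(x,y) ≤ -(1/(2π)) ln|x-y| + C`. -/
theorem hypGreen_log_upper_bound :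
    ∃ C : ℝ, ∀ x ∈ ball (0 : EuclideanSpace ℝ (Fin 2)) 1,
      ∀ y ∈ ball (0 : EuclideanSpace ℝ (Fin 2)) 1, x ≠ y →
        hypGreen x y ≤ -(1 / (2 * π)) * Real.log ‖x - y‖ + C := by
  use (4 + 2 * Real.log 2) / (4 * π)
  intro x hx y hy hxy
  have hx1 : ‖x‖ < 1 := by simpa [dist_eq_norm] using mem_ball_iff_norm.mp hx
  have hy1 : ‖y‖ < 1 := by simpa [dist_eq_norm] using mem_ball_iff_norm.mp hy
  set d : ℝ := ‖x - y‖ with hd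
  have hd0 : 0 < d := by
    rw [hd]; exact norm_sub_pos_iff.mpr hxy
  have hd2 : d < 2 := by
    calc d ≤ ‖x‖ + ‖y‖ := norm_sub_le x y
      _ < 2 := by linarith
  obtain ⟨hμ1, hμ2⟩ := aux_mobius_norm x y hx1 hy1
  set μ := ‖mobius x y‖ with hμ
  have hμ0 : 0 ≤ μ := norm_nonneg _
  set S : ℝ := Real.sinh (rhoDist (mobius x y) / 2) ^ 2 with hSdef
  have hSval : S = μ ^ 2 / (1 - μ ^ 2) := by
    rw [hSdef, rhoDist, ← hμ, aux_sinh_half_log_sq hμ0 hμ1]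
  have hab : 0 < (1 - ‖x‖ ^ 2) * (1 - ‖y‖ ^ 2) := by
    apply mul_pos <;> nlinarith [norm_nonneg x, norm_nonneg y]
  have hab1 : (1 - ‖x‖ ^ 2) * (1 - ‖y‖ ^ 2) ≤ 1 := by
    have hA0 : (0:ℝ) ≤ ‖x‖ ^ 2 := sq_nonneg _
    have hB1 : (0:ℝ) ≤ 1 - ‖y‖ ^ 2 := by nlinarith [norm_nonneg y]
    nlinarith [mul_nonneg hA0 hB1, sq_nonneg ‖y‖]
  have hμlt : μ ^ 2 < 1 := by nlinarith
  rw [← hd] at hμ2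
  have hSeq : S * ((1 - ‖x‖ ^ 2) * (1 - ‖y‖ ^ 2)) = d ^ 2 := by
    rw [hSval, div_mul_eq_mul_div, div_eq_iff (by nlinarith : (1:ℝ) - μ ^ 2 ≠ 0)]
    linear_combination hμ2
  have hS0 : 0 ≤ S := hSdef ▸ sq_nonneg _
  have hS : d ^ 2 ≤ S := by
    have := mul_nonneg hS0 (by linarith : (0:ℝ) ≤ 1 - (1 - ‖x‖ ^ 2) * (1 - ‖y‖ ^ 2))
    nlinarith [hSeq]
  have hmain := aux_full_integral_bound hd0 hd2 hS
  have hπ : (0:ℝ) < π := Real.pi_pos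
  rw [hypGreen]
  have hfactor : (0:ℝ) ≤ 1 / (4 * π) := by positivity
  calc (1 / (4 * π)) * ∫ t in Set.Ioo (0 : ℝ) 1,
        t ^ (-(1 / 2) : ℝ) * (1 - t) ^ (-(1 / 2) : ℝ) * (S + t) ^ (-(1 / 2) : ℝ)
      ≤ (1 / (4 * π)) * (-2 * Real.log d + (4 + 2 * Real.log 2)) :=
        mul_le_mul_of_nonneg_left hmain hfactor
    _ = -(1 / (2 * π)) * Real.log d + (4 + 2 * Real.log 2) / (4 * π) := by
        field_simp
        ring

end
end

section
/- Let v ∈ C²(R²) be a bounded radial solution of −Δv = 8e^{η₀} v on R², where η₀(x) = −2 ln(1+|x|²), with ∫_{R²}|∇v|² dx < ∞. Then there exists α₀ ∈ R such that v(x) = α₀ (1−|x|²)/(1+|x|²) for all x ∈ R². -/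
open MeasureTheory

noncomputable section

/-- The Euclidean Laplacian on `ℝ²`, as the sum of second partial derivatives. -/
def lap (f : EuclideanSpace ℝ (Fin 2) → ℝ) (x : EuclideanSpace ℝ (Fin 2)) : ℝ :=
  ∑ i : Fin 2,
    fderiv ℝ (fun y => fderiv ℝ f y (EuclideanSpace.single i 1)) x (EuclideanSpace.single i 1)

/- ### Auxiliary lemmas -/

private lemma hasDerivAt_W (r : ℝ) :
    HasDerivAt (fun t : ℝ => (1 - t^2)/(1 + t^2)) (-4*r/(1+r^2)^2) r := by
  have h1 : (0:ℝ) < 1 + r^2 := by positivity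
  have := ((hasDerivAt_const r (1:ℝ)).fun_sub (hasDerivAt_pow 2 r)).fun_div
    ((hasDerivAt_const r (1:ℝ)).fun_add (hasDerivAt_pow 2 r)) h1.ne'
  refine this.congr_deriv ?_
  field_simp
  ring

private lemma hasDerivAt_W1 (r : ℝ) :
    HasDerivAt (fun t : ℝ => -4*t/(1+t^2)^2) ((12*r^2-4)/(1+r^2)^3) r := by
  have h1 : (0:ℝ) < 1 + r^2 := by positivity
  have h2 : ((1:ℝ)+r^2)^2 ≠ 0 := by positivity
  have hnum : HasDerivAt (fun t : ℝ => -4*t) (-4) r := by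
    simpa using (hasDerivAt_id r).const_mul (-4 : ℝ)
  have hden : HasDerivAt (fun t : ℝ => (1+t^2)^2) (2*(1+r^2)*(2*r)) r := by
    have : HasDerivAt (fun t : ℝ => 1 + t^2) (2*r) r := by
      simpa using (hasDerivAt_pow 2 r).const_add 1
    simpa using (this.fun_pow 2)
  have := hnum.fun_div hden h2
  refine this.congr_deriv ?_
  field_simp
  ring

private lemma line_deriv (v : EuclideanSpace ℝ (Fin 2) → ℝ) (hv : Differentiable ℝ v)
    (x u : EuclideanSpace ℝ (Fin 2)) (s : ℝ) :
    deriv (fun t => v (x + t • u)) s = fderiv ℝ v (x + s • u) u := by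
  have hline : HasDerivAt (fun t : ℝ => x + t • u) u s := by
    simpa using ((hasDerivAt_id s).smul_const u).const_add x
  exact ((hv (x + s • u)).hasFDerivAt.comp_hasDerivAt s hline).deriv

private lemma second_deriv_line (v : EuclideanSpace ℝ (Fin 2) → ℝ) (hv : ContDiff ℝ 2 v)
    (x u : EuclideanSpace ℝ (Fin 2)) :
    fderiv ℝ (fun y => fderiv ℝ v y u) x u
      = deriv (fun s : ℝ => deriv (fun t => v (x + t • u)) s) 0 := by
  have hdv : Differentiable ℝ v := hv.differentiable (by norm_num)
  have h1 : ContDiff ℝ 1 (fderiv ℝ v) := ContDiff.fderiv_right hv (by norm_num)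
  have hd : Differentiable ℝ (fun y => fderiv ℝ v y u) :=
    (h1.differentiable one_ne_zero).clm_apply (differentiable_const u)
  have key : (fun s : ℝ => deriv (fun t => v (x + t • u)) s)
      = fun s : ℝ => (fun y => fderiv ℝ v y u) (x + s • u) := by
    funext s; exact line_deriv v hdv x u s
  have h0 : deriv (fun s : ℝ => fderiv ℝ v (x + s • u) u) 0
      = fderiv ℝ (fun y => fderiv ℝ v y u) x u := by
    simpa using line_deriv (fun y => fderiv ℝ v y u) hd x u 0
  rw [← key] at h0
  exact h0.symm

private lemma norm_comb (r t : ℝ) :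
    ‖r • EuclideanSpace.single (0 : Fin 2) (1:ℝ) + t • EuclideanSpace.single (1 : Fin 2) (1:ℝ)‖
      = Real.sqrt (r^2 + t^2) := by
  rw [EuclideanSpace.norm_eq]
  congr 1
  simp [Fin.sum_univ_two, EuclideanSpace.single_apply, Real.norm_eq_abs, sq_abs]

private lemma norm_smul_e0 (r : ℝ) :
    ‖r • EuclideanSpace.single (0 : Fin 2) (1:ℝ)‖ = |r| := by
  rw [norm_smul, EuclideanSpace.norm_single]
  simp

private lemma lap_radial (v : EuclideanSpace ℝ (Fin 2) → ℝ) (hv : ContDiff ℝ 2 v)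
    (hrad : ∀ x y : EuclideanSpace ℝ (Fin 2), ‖x‖ = ‖y‖ → v x = v y)
    (r : ℝ) (hr : 0 < r) :
    lap v (r • EuclideanSpace.single (0 : Fin 2) (1:ℝ))
      = deriv (deriv (fun t : ℝ => v (t • EuclideanSpace.single (0 : Fin 2) (1:ℝ)))) r
        + deriv (fun t : ℝ => v (t • EuclideanSpace.single (0 : Fin 2) (1:ℝ))) r / r := by
  have hdv : Differentiable ℝ v := hv.differentiable (by norm_num)
  set e0 : EuclideanSpace ℝ (Fin 2) := EuclideanSpace.single (0 : Fin 2) (1:ℝ) with he0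
  set e1 : EuclideanSpace ℝ (Fin 2) := EuclideanSpace.single (1 : Fin 2) (1:ℝ) with he1
  set g : ℝ → ℝ := fun t => v (t • e0) with hgdef
  have hg : ContDiff ℝ 2 g := hv.comp (contDiff_id.smul contDiff_const)
  have hgd : Differentiable ℝ g := hg.differentiable (by norm_num)
  have hg' : ContDiff ℝ ((1:WithTop ℕ∞)+1) g := by norm_num; exact hg
  have hg1 : ContDiff ℝ 1 (deriv g) := (contDiff_succ_iff_deriv.mp hg').2.2
  have hg1d : Differentiable ℝ (deriv g) := hg1.differentiable one_ne_zero
  have hvg : ∀ y, v y = g ‖y‖ := by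
    intro y
    refine hrad y (‖y‖ • e0) ?_
    rw [he0, norm_smul_e0, abs_of_nonneg (norm_nonneg y)]
  -- the i = 0 term
  have term0 : fderiv ℝ (fun y => fderiv ℝ v y e0) (r • e0) e0 = deriv (deriv g) r := by
    rw [second_deriv_line v hv (r • e0) e0]
    have key : ∀ t : ℝ, r • e0 + t • e0 = (r + t) • e0 := by
      intro t; rw [add_smul]
    have e1' : (fun t : ℝ => v (r • e0 + t • e0)) = fun t => g (r + t) := by
      funext t; rw [key t]
    rw [e1']
    have e2 : (fun s : ℝ => deriv (fun t : ℝ => g (r + t)) s) = fun s : ℝ => deriv g (r + s) := by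
      funext s; exact deriv_comp_const_add g r s
    rw [e2]
    have e3 : deriv (fun s : ℝ => deriv g (r + s)) 0 = deriv (deriv g) (r + 0) :=
      deriv_comp_const_add (deriv g) r 0
    rw [e3, add_zero]
  -- the i = 1 term
  have hψ : ∀ s : ℝ, HasDerivAt (fun t : ℝ => Real.sqrt (r^2 + t^2))
      (s / Real.sqrt (r^2 + s^2)) s := by
    intro s
    have hne : r^2 + s^2 ≠ 0 := by positivity
    have hq : HasDerivAt (fun t : ℝ => r^2 + t^2) (2*s) s := by
      simpa using (hasDerivAt_pow 2 s).const_add (r^2)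
    have := (Real.hasDerivAt_sqrt hne).comp s hq
    refine this.congr_deriv ?_
    have hs : Real.sqrt (r^2 + s^2) ≠ 0 := by positivity
    field_simp
  have hψ0 : Real.sqrt (r^2 + 0^2) = r := by
    rw [pow_two (0:ℝ), mul_zero, add_zero, Real.sqrt_sq hr.le]
  have term1 : fderiv ℝ (fun y => fderiv ℝ v y e1) (r • e0) e1 = deriv g r / r := by
    rw [second_deriv_line v hv (r • e0) e1]
    have e1' : (fun t : ℝ => v (r • e0 + t • e1)) = fun t => g (Real.sqrt (r^2 + t^2)) := by
      funext t; rw [hvg, he0, he1, norm_comb]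
    rw [e1']
    have e2 : (fun s : ℝ => deriv (fun t : ℝ => g (Real.sqrt (r^2 + t^2))) s)
        = fun s : ℝ => deriv g (Real.sqrt (r^2 + s^2)) * (s / Real.sqrt (r^2 + s^2)) := by
      funext s
      exact ((hgd _).hasDerivAt.comp s (hψ s)).deriv
    rw [e2]
    have hA : HasDerivAt (fun s : ℝ => deriv g (Real.sqrt (r^2 + s^2)))
        (deriv (deriv g) (Real.sqrt (r^2 + 0^2)) * (0 / Real.sqrt (r^2 + 0^2))) 0 :=
      (hg1d _).hasDerivAt.comp 0 (hψ 0)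
    have hB : HasDerivAt (fun s : ℝ => s / Real.sqrt (r^2 + s^2))
        ((1 * Real.sqrt (r^2 + 0^2) - 0 * (0 / Real.sqrt (r^2 + 0^2))) / (Real.sqrt (r^2+0^2))^2)
        0 := (hasDerivAt_id 0).div (hψ 0) (by rw [hψ0]; exact hr.ne')
    have := (hA.fun_mul hB).deriv
    rw [this]
    rw [hψ0]
    field_simp
    ring
  -- put it together
  rw [← term0, ← term1]
  rw [lap, Fin.sum_univ_two]

private lemma ode_classify (g : ℝ → ℝ) (hgd : Differentiable ℝ g)
    (hg1d : Differentiable ℝ (deriv g))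
    (hode : ∀ r : ℝ, 0 < r → deriv (deriv g) r = -(deriv g r / r) - 8/(1+r^2)^2 * g r)
    (hg'0 : deriv g 0 = 0) :
    ∀ r : ℝ, 0 ≤ r → g r = g 0 * ((1-r^2)/(1+r^2)) := by
  set c : ℝ := g 0 with hc
  set h : ℝ → ℝ := fun r => g r - c * ((1-r^2)/(1+r^2)) with hhdef
  set h1 : ℝ → ℝ := fun r => deriv g r - c * (-4*r/(1+r^2)^2) with hh1def
  set h2 : ℝ → ℝ := fun r => deriv (deriv g) r - c * ((12*r^2-4)/(1+r^2)^3) with hh2def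
  have hh : ∀ r, HasDerivAt h (h1 r) r := fun r =>
    (hgd r).hasDerivAt.sub ((hasDerivAt_W r).const_mul c)
  have hh1 : ∀ r, HasDerivAt h1 (h2 r) r := fun r =>
    (hg1d r).hasDerivAt.sub ((hasDerivAt_W1 r).const_mul c)
  have hodeW : ∀ r : ℝ, r ≠ 0 →
      (12*r^2-4)/(1+r^2)^3 = -((-4*r/(1+r^2)^2) / r) - 8/(1+r^2)^2 * ((1-r^2)/(1+r^2)) := by
    intro r hr
    have h1r : (1:ℝ) + r^2 ≠ 0 := by positivity
    field_simp
    ring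
  have hodeh : ∀ r : ℝ, 0 < r → h2 r = -(h1 r / r) - 8/(1+r^2)^2 * h r := by
    intro r hr
    have hr0 : r ≠ 0 := hr.ne'
    simp only [hh2def, hh1def, hhdef]
    rw [hode r hr, hodeW r hr0]
    have h1r : (1:ℝ) + r^2 ≠ 0 := by positivity
    field_simp
    ring
  have h0 : h 0 = 0 := by simp [hhdef, hc]
  have h10 : h1 0 = 0 := by simp [hh1def, hg'0]
  set E : ℝ → ℝ := fun r => h r ^ 2 + h1 r ^ 2 with hEdef
  have hE : ∀ r, HasDerivAt E (2 * h r * h1 r + 2 * h1 r * h2 r) r := by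
    intro r
    have := ((hh r).fun_pow 2).fun_add ((hh1 r).fun_pow 2)
    simpa [mul_comm, mul_assoc, mul_left_comm] using this
  set F : ℝ → ℝ := fun r => E r * Real.exp (-9*r) with hFdef
  have hexp' : ∀ r : ℝ, HasDerivAt (fun t : ℝ => Real.exp (-9*t)) (-9 * Real.exp (-9*r)) r := by
    intro r
    have harg : HasDerivAt (fun t : ℝ => -9*t) (-9) r := by
      simpa using (hasDerivAt_id r).const_mul (-9 : ℝ)
    simpa [mul_comm] using harg.exp
  have hF : ∀ r, HasDerivAt F
      ((2 * h r * h1 r + 2 * h1 r * h2 r) * Real.exp (-9*r) + E r * (-9 * Real.exp (-9*r))) r :=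
    fun r => (hE r).mul (hexp' r)
  have hFd : Differentiable ℝ F := fun r => (hF r).differentiableAt
  have hkey : ∀ r : ℝ, 0 < r → deriv F r ≤ 0 := by
    intro r hr
    rw [(hF r).deriv]
    rw [hodeh r hr]
    set a := h r
    set b := h1 r
    have hρ : (0:ℝ) < Real.exp (-9*r) := Real.exp_pos _
    have hV0 : (0:ℝ) < 8/(1+r^2)^2 := by positivity
    have hV8 : 8/(1+r^2)^2 ≤ 8 := by
      rw [div_le_iff₀ (by positivity)]
      nlinarith [sq_nonneg r, sq_nonneg (r^2)]
    have hb2 : 0 ≤ b^2 / r := by positivity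
    have core : 2*a*b + 2*b*(-(b/r) - 8/(1+r^2)^2 * a) ≤ 9 * (a^2 + b^2) := by
      have hsplit : 2*b*(-(b/r) - 8/(1+r^2)^2 * a)
          = -2*(b^2/r) - 2*(8/(1+r^2)^2)*a*b := by ring
      rw [hsplit]
      nlinarith [sq_nonneg (a-b), sq_nonneg (a+b), mul_nonneg hV0.le (sq_nonneg (a-b)),
        mul_nonneg (by linarith : (0:ℝ) ≤ 8 - 8/(1+r^2)^2) (sq_nonneg (a+b)), hb2]
    have hmul := mul_le_mul_of_nonneg_right core hρ.le
    have hEr : E r * (-9 * Real.exp (-9*r)) = -(9 * (a^2 + b^2) * Real.exp (-9*r)) := by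
      show (a^2 + b^2) * (-9 * Real.exp (-9*r)) = _
      ring
    rw [hEr]
    linarith [hmul]
  have hFanti : AntitoneOn F (Set.Ici 0) := by
    refine antitoneOn_of_deriv_nonpos (convex_Ici 0) hFd.continuous.continuousOn
      hFd.differentiableOn ?_
    intro x hx
    rw [interior_Ici] at hx
    exact hkey x hx
  have hzero : ∀ r : ℝ, 0 ≤ r → h r = 0 := by
    intro r hr
    have hFr : F r ≤ F 0 := hFanti (Set.self_mem_Ici) hr hr
    have hF0 : F 0 = 0 := by simp [hFdef, hEdef, h0, h10]
    rw [hF0] at hFr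
    have hρ : (0:ℝ) < Real.exp (-9*r) := Real.exp_pos _
    have hE0 : E r ≤ 0 := by
      by_contra hcon
      push_neg at hcon
      have : 0 < F r := mul_pos hcon hρ
      linarith
    have hh2 : h r ^ 2 = 0 := by
      have := sq_nonneg (h1 r)
      have := sq_nonneg (h r)
      simp only [hEdef] at hE0
      linarith
    exact pow_eq_zero_iff (by norm_num) |>.mp hh2
  intro r hr
  have := hzero r hr
  simp only [hhdef] at this
  linarith

/-- Classification of bounded radial finite-energy solutions of the linearized
Liouville equation `-Δv = 8 e^{η₀} v` on `ℝ²`: they are multiples of `(1-|x|²)/(1+|x|²)`. -/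
theorem radial_linearized_liouville_classification
    (v : EuclideanSpace ℝ (Fin 2) → ℝ)
    (hv : ContDiff ℝ 2 v)
    (hbdd : ∃ M : ℝ, ∀ x, |v x| ≤ M)
    (hrad : ∀ x y : EuclideanSpace ℝ (Fin 2), ‖x‖ = ‖y‖ → v x = v y)
    (heq : ∀ x : EuclideanSpace ℝ (Fin 2),
      -lap v x = 8 * Real.exp (-2 * Real.log (1 + ‖x‖ ^ 2)) * v x)
    (henergy : Integrable (fun x : EuclideanSpace ℝ (Fin 2) => ‖gradient v x‖ ^ 2)) :
    ∃ α₀ : ℝ, ∀ x : EuclideanSpace ℝ (Fin 2),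
      v x = α₀ * ((1 - ‖x‖ ^ 2) / (1 + ‖x‖ ^ 2)) := by
  have hdv : Differentiable ℝ v := hv.differentiable (by norm_num)
  have hg : ContDiff ℝ 2 (fun t : ℝ => v (t • EuclideanSpace.single (0 : Fin 2) (1:ℝ))) :=
    hv.comp (contDiff_id.smul contDiff_const)
  have hgd : Differentiable ℝ (fun t : ℝ => v (t • EuclideanSpace.single (0 : Fin 2) (1:ℝ))) :=
    hg.differentiable (by norm_num)
  have hg' : ContDiff ℝ ((1:WithTop ℕ∞)+1)
      (fun t : ℝ => v (t • EuclideanSpace.single (0 : Fin 2) (1:ℝ))) := by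
    norm_num; exact hg
  have hg1d : Differentiable ℝ
      (deriv (fun t : ℝ => v (t • EuclideanSpace.single (0 : Fin 2) (1:ℝ)))) :=
    ((contDiff_succ_iff_deriv.mp hg').2.2).differentiable one_ne_zero
  have hvg : ∀ y, v y = (fun t : ℝ => v (t • EuclideanSpace.single (0 : Fin 2) (1:ℝ))) ‖y‖ := by
    intro y
    refine hrad y (‖y‖ • EuclideanSpace.single (0 : Fin 2) (1:ℝ)) ?_
    rw [norm_smul_e0, abs_of_nonneg (norm_nonneg y)]
  -- the derivative at 0 vanishes by evenness
  have geven : ∀ t : ℝ, (fun t : ℝ => v (t • EuclideanSpace.single (0 : Fin 2) (1:ℝ))) (-t)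
      = (fun t : ℝ => v (t • EuclideanSpace.single (0 : Fin 2) (1:ℝ))) t := by
    intro t
    exact hrad _ _ (by rw [norm_smul_e0, norm_smul_e0, abs_neg])
  have hg'0 : deriv (fun t : ℝ => v (t • EuclideanSpace.single (0 : Fin 2) (1:ℝ))) 0 = 0 := by
    set g : ℝ → ℝ := fun t : ℝ => v (t • EuclideanSpace.single (0 : Fin 2) (1:ℝ)) with hgdef
    have harg : HasDerivAt (fun t : ℝ => -t) (-1 : ℝ) 0 := hasDerivAt_neg 0
    have hneg : HasDerivAt (fun t : ℝ => g (-t)) (-(deriv g 0)) 0 := by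
      have := ((hgd (-(0:ℝ))).hasDerivAt).comp 0 harg
      simpa [Function.comp_def] using this
    have heq2 : (fun t : ℝ => g (-t)) = g := funext geven
    rw [heq2] at hneg
    have := hneg.unique (hgd 0).hasDerivAt
    linarith
  -- the radial ODE
  have hode : ∀ r : ℝ, 0 < r →
      deriv (deriv (fun t : ℝ => v (t • EuclideanSpace.single (0 : Fin 2) (1:ℝ)))) r
        = -(deriv (fun t : ℝ => v (t • EuclideanSpace.single (0 : Fin 2) (1:ℝ))) r / r)
          - 8/(1+r^2)^2 * (fun t : ℝ => v (t • EuclideanSpace.single (0 : Fin 2) (1:ℝ))) r := by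
    intro r hr
    have h1 := heq (r • EuclideanSpace.single (0 : Fin 2) (1:ℝ))
    rw [lap_radial v hv hrad r hr] at h1
    have hnorm : ‖r • EuclideanSpace.single (0 : Fin 2) (1:ℝ)‖ = r := by
      rw [norm_smul_e0, abs_of_pos hr]
    rw [hnorm] at h1
    have hexp : Real.exp (-2 * Real.log (1+r^2)) = ((1+r^2)^2)⁻¹ := by
      rw [show -2 * Real.log (1+r^2) = Real.log (((1+r^2)^2)⁻¹) by
        rw [Real.log_inv, Real.log_pow]; push_cast; ring]
      exact Real.exp_log (by positivity)
    rw [hexp] at h1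
    have hinv : (8:ℝ)/(1+r^2)^2 * v (r • EuclideanSpace.single (0 : Fin 2) (1:ℝ))
        = 8 * ((1+r^2)^2)⁻¹ * v (r • EuclideanSpace.single (0 : Fin 2) (1:ℝ)) := by ring
    simp only []
    rw [hinv]
    linarith [h1]
  have hfin := ode_classify (fun t : ℝ => v (t • EuclideanSpace.single (0 : Fin 2) (1:ℝ)))
    hgd hg1d hode hg'0
  refine ⟨v ((0:ℝ) • EuclideanSpace.single (0 : Fin 2) (1:ℝ)), fun x => ?_⟩
  rw [hvg x]
  exact hfin ‖x‖ (norm_nonneg x)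

end
end
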